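/- Let π be a torsion-free group such that the centralizer Z({g}) of every nontrivial element g ∈ π is cyclic. Then π is principal: for all finite subsets S, S' ⊆ π, the index of Z(S) ∩ Z(S') in Z(S) is either 1 or infinite. -/

import Mathlib

/-- The pre-2025 Mathlib definition of `Monoid.IsTorsionFree` (removed since). -/
def Monoid.IsTorsionFree (G : Type*) [Monoid G] : Prop :=
  ∀ g : G, g ≠ 1 → ¬IsOfFinOrder g

/-- A torsion-free group in which the centralizer of every nontrivial element
is cyclic is principal: for all finite subsets `S, S' ⊆ π`, the index of
`Z(S) ∩ Z(S')` in `Z(S)` is either `1` or infinite (infinite index is encoded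
by relative index `0`). -/
theorem stmt8 {π : Type*} [Group π] (htf : Monoid.IsTorsionFree π)
    (hcyc : ∀ g : π, g ≠ 1 → ∃ x : π, Subgroup.centralizer {g} = Subgroup.zpowers x) :
    ∀ S S' : Finset π,
      (Subgroup.centralizer (S : Set π) ⊓ Subgroup.centralizer (S' : Set π)).relIndex
          (Subgroup.centralizer (S : Set π)) = 1 ∨
      (Subgroup.centralizer (S : Set π) ⊓ Subgroup.centralizer (S' : Set π)).relIndex
          (Subgroup.centralizer (S : Set π)) = 0 := by
  intro S S'
  by_cases h0 : (Subgroup.centralizer (S : Set π) ⊓ Subgroup.centralizer (S' : Set π)).relIndex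
      (Subgroup.centralizer (S : Set π)) = 0
  · exact Or.inr h0
  left
  rw [Subgroup.relIndex_eq_one]
  intro g hg
  refine ⟨hg, ?_⟩
  by_cases hg1 : g = 1
  · subst hg1; exact (Subgroup.centralizer _).one_mem
  -- find a positive power of g in the intersection
  obtain ⟨n, hn, -, hgn⟩ := Subgroup.exists_pow_mem_of_relIndex_ne_zero h0 hg
  have hgn' : g ^ n ∈ Subgroup.centralizer (S' : Set π) := hgn.1.2
  have hgnne : g ^ n ≠ 1 := by
    intro h
    exact (htf g hg1 (isOfFinOrder_iff_pow_eq_one.mpr ⟨n, hn, h⟩))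
  obtain ⟨x, hx⟩ := hcyc (g ^ n) hgnne
  -- g and every element of S' lie in the cyclic (hence abelian) group zpowers x
  have hgmem : g ∈ Subgroup.zpowers x := by
    rw [← hx, Subgroup.mem_centralizer_iff]
    rintro y rfl
    exact (Commute.self_pow g n).symm
  show g ∈ Subgroup.centralizer (S' : Set π)
  rw [Subgroup.mem_centralizer_iff]
  intro s hs
  have hsmem : s ∈ Subgroup.zpowers x := by
    rw [← hx, Subgroup.mem_centralizer_iff]
    rintro y rfl
    exact (Subgroup.mem_centralizer_iff.mp hgn' s hs).symm
  obtain ⟨a, ha⟩ := hgmem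
  obtain ⟨b, hb⟩ := hsmem
  rw [← ha, ← hb]
  exact (Commute.zpow_zpow_self x b a)
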